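/- For every natural number m, F_m = (a/b)^{⌊m/2⌋}·F_1^m, where F is the bi-periodic Fibonacci matrix sequence. -/

import Mathlib

theorem stmt_16 (a b : ℝ) (ha : a ≠ 0) (hb : b ≠ 0)
  (F : ℕ → Matrix (Fin 2) (Fin 2) ℝ) (hF0 : F 0 = 1) (hF1 : F 1 = !![b, b/a; 1, 0])
  (hF : ∀ n : ℕ, F (n + 2) = if Even (n + 2) then a • F (n + 1) + F n else b • F (n + 1) + F n) :
    ∀ m : ℕ, F m = (a/b) ^ (m / 2) • (F 1) ^ m := by
  set M : Matrix (Fin 2) (Fin 2) ℝ := F 1 with hM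
  have hM2 : M ^ 2 = b • M + (b/a) • 1 := by
    rw [hF1]
    ext i j
    fin_cases i <;> fin_cases j <;>
      simp [sq, Matrix.mul_apply, Fin.sum_univ_two, Matrix.one_apply] <;> ring
  have hMsq : ∀ n : ℕ, M ^ (n + 2) = b • M ^ (n + 1) + (b/a) • M ^ n := by
    intro n
    rw [pow_add, hM2, Matrix.mul_add, Matrix.mul_smul, Matrix.mul_smul, Matrix.mul_one,
      ← pow_succ]
  have key : ∀ m : ℕ, F m = (a/b) ^ (m / 2) • M ^ m ∧
      F (m + 1) = (a/b) ^ ((m + 1) / 2) • M ^ (m + 1) := by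
    intro m
    induction m with
    | zero => simp [hF0, hM]
    | succ n ih =>
      refine ⟨ih.2, ?_⟩
      rw [hF n, ih.1, ih.2]
      by_cases hn : Even n
      · obtain ⟨k, rfl⟩ := hn
        have hev : Even (k + k + 2) := ⟨k + 1, by ring⟩
        rw [if_pos hev]
        have e0 : (k + k) / 2 = k := by omega
        have e1 : (k + k + 1) / 2 = k := by omega
        have e2 : (k + k + 2) / 2 = k + 1 := by omega
        have s1 : (a/b) ^ (k + 1) * b = a * (a/b) ^ k := by rw [pow_succ, mul_assoc, div_mul_cancel₀ a hb, mul_comm]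
        have s2 : (a/b) ^ (k + 1) * (b/a) = (a/b) ^ k := by rw [pow_succ, mul_assoc, div_mul_div_comm, mul_comm a b, div_self (mul_ne_zero hb ha), mul_one]
        rw [e0, e1, e2]
        conv_rhs => rw [hMsq]
        rw [smul_add]
        simp only [smul_smul]
        rw [s1, s2, mul_smul]
      · rw [if_neg (by simpa [Nat.even_add] using hn)]
        obtain ⟨k, hk⟩ := Nat.odd_iff.mpr (Nat.not_even_iff.mp hn)
        subst hk
        have e0 : (2 * k + 1) / 2 = k := by omega
        have e1 : (2 * k + 1 + 1) / 2 = k + 1 := by omega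
        have e2 : (2 * k + 1 + 2) / 2 = k + 1 := by omega
        have s2 : (a/b) ^ (k + 1) * (b/a) = (a/b) ^ k := by rw [pow_succ, mul_assoc, div_mul_div_comm, mul_comm a b, div_self (mul_ne_zero hb ha), mul_one]
        rw [e0, e1, e2]
        conv_rhs => rw [hMsq]
        rw [smul_add]
        simp only [smul_smul]
        rw [s2, mul_comm ((a/b) ^ (k + 1)) b, mul_smul]
  exact fun m => (key m).1
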